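/- Let P be a measurable subset of Cantor space 2^ω and τ a finite binary string with relative density d(τ,P) = μ([τ]∩P)·2^|τ| ≥ δ. Define P̂ = {X ∈ 2^ω : X extends τ and for every σ with τ ⪯ σ ≺ X, d(σ,P) ≥ δ/2}. If S is a prefix-free set of strings extending τ whose cylinders cover [τ]\P̂, then μ(⋃_{σ∈S}[σ])·(1−δ/2) ≤ μ([τ]\P), and consequently P̂ has positive measure (assuming δ > 0). -/

import Mathlib

open MeasureTheory ENNReal

/-! ### Cantor space and the uniform (coin-flipping) measure -/

/-- The binary digits of a real number in `[0,1)`, giving a point of Cantor space. -/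
noncomputable def binaryDigits (x : ℝ) : ℕ → Bool :=
  fun n => decide (⌊x * 2 ^ (n + 1)⌋ % 2 = 1)

/-- The uniform (Lebesgue / coin-flipping) measure on Cantor space `2^ω`,
obtained as the pushforward of Lebesgue measure on `[0,1)` under binary expansion. -/
noncomputable def μCantor : Measure (ℕ → Bool) :=
  Measure.map binaryDigits (volume.restrict (Set.Ico (0 : ℝ) 1))

/-- `σ` is an initial segment of the infinite sequence `X`. -/
def IsPrefixOf (σ : List Bool) (X : ℕ → Bool) : Prop :=
  ∀ i : Fin σ.length, X i = σ.get i

/-- The cylinder determined by a finite binary string. -/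
def cylinder (σ : List Bool) : Set (ℕ → Bool) := {X | IsPrefixOf σ X}

/-- The open set generated by a set of finite binary strings. -/
def openOf (S : Set (List Bool)) : Set (ℕ → Bool) := ⋃ σ ∈ S, cylinder σ

/-- The density of a set `P` above the string `τ`: `μ([τ] ∩ P) · 2^{|τ|}`. -/
noncomputable def dens (τ : List Bool) (P : Set (ℕ → Bool)) : ℝ≥0∞ :=
  μCantor (cylinder τ ∩ P) * 2 ^ τ.length

/-- The length-`n` initial segment of `X`, as a finite binary string. -/
def strPrefix (X : ℕ → Bool) (n : ℕ) : List Bool := (List.range n).map X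

/-- A set of strings is prefix-free if no element is a proper prefix of another. -/
def PrefixFreeSet (S : Set (List Bool)) : Prop :=
  ∀ σ ∈ S, ∀ τ ∈ S, σ <+: τ → σ = τ

/-- The weight `∑_{σ ∈ S} 2^{-|σ|}` of a set of strings. -/
noncomputable def weight (S : Set (List Bool)) : ℝ≥0∞ :=
  ∑' σ : S, 2⁻¹ ^ (σ : List Bool).length

/-- A set of strings is bounded if its weight is finite. -/
def BoundedStr (S : Set (List Bool)) : Prop := weight S < ⊤

/-- The tail `X(·+k)` of an infinite binary sequence. -/
def tailSeq (X : ℕ → Bool) (k : ℕ) : ℕ → Bool := fun n => X (n + k)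

/-! ### Oracle computability -/

/-- The `e`-th computably enumerable set of naturals (the domain of the `e`-th
partial computable function). -/
def WEnum (e n : ℕ) : Prop := ((Denumerable.ofNat Nat.Partrec.Code e).eval n).Dom

/-- `OracleComputes e X n m` holds if the `e`-th Turing functional with oracle `X`
outputs `m` on input `n`; a Turing functional is presented by the c.e. set `W_e`
of coded axioms `(σ, n, m)`, and `Γ_e^X(n) = m` iff some initial segment `σ` of `X`
has `(σ, n, m) ∈ W_e`. -/
def OracleComputes (e : ℕ) (X : ℕ → Bool) (n m : ℕ) : Prop :=
  ∃ σ : List Bool, IsPrefixOf σ X ∧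
    WEnum e (Nat.pair (Encodable.encode σ) (Nat.pair n m))

def natOfBool (b : Bool) : ℕ := cond b 1 0

/-- `f : ℕ → ℕ` is computable with oracle `A`: some Turing functional with oracle `A`
has graph exactly `f`. -/
def FnComputableIn (f : ℕ → ℕ) (A : ℕ → Bool) : Prop :=
  ∃ e, ∀ n m, OracleComputes e A n m ↔ m = f n

/-- Turing reducibility `B ≤_T A` for subsets of `ω` (as elements of Cantor space). -/
def TuringLE (B A : ℕ → Bool) : Prop := FnComputableIn (fun n => natOfBool (B n)) A

/-- Turing equivalence. -/
def TuringEquiv (A B : ℕ → Bool) : Prop := TuringLE A B ∧ TuringLE B A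

/-- The Turing join `A ⊕ B`. -/
def joinSet (A B : ℕ → Bool) : ℕ → Bool :=
  fun n => if n % 2 = 0 then A (n / 2) else B (n / 2)

open Classical in
/-- The Turing jump `A′ = {e : Γ_e^A(e)↓}`. -/
noncomputable def jump (A : ℕ → Bool) : ℕ → Bool :=
  fun e => decide (∃ m, OracleComputes e A e m)

/-- The empty oracle. -/
def emptyOracle : ℕ → Bool := fun _ => false

/-- The halting problem `∅′`. -/
noncomputable def zeroJump : ℕ → Bool := jump emptyOracle

/-- A set is computable iff it is Turing reducible to the empty oracle. -/
def ComputableSet (A : ℕ → Bool) : Prop := TuringLE A emptyOracle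

/-- A set of naturals is c.e. in `A`. -/
def CeIn (A : ℕ → Bool) (S : Set ℕ) : Prop :=
  ∃ e, ∀ n, n ∈ S ↔ ∃ m, OracleComputes e A n m

/-- A set of strings is c.e. in `A`. -/
def CeStrIn (A : ℕ → Bool) (S : Set (List Bool)) : Prop :=
  ∃ e, ∀ σ : List Bool, σ ∈ S ↔ ∃ m, OracleComputes e A (Encodable.encode σ) m

/-- A c.e. set of strings. -/
def CeStr (S : Set (List Bool)) : Prop := CeStrIn emptyOracle S

/-! ### Π⁰₁ classes, Martin-Löf randomness, K-triviality -/

/-- A `Π⁰₁(A)` class: the complement of the union of cylinders over an `A`-c.e.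
set of strings. -/
def Pi01In (A : ℕ → Bool) (P : Set (ℕ → Bool)) : Prop :=
  ∃ S : Set (List Bool), CeStrIn A S ∧ P = (openOf S)ᶜ

/-- A `Π⁰₁` class. -/
def Pi01 (P : Set (ℕ → Bool)) : Prop := Pi01In emptyOracle P

/-- The `n`-th level of the `e`-th `A`-effective sequence of open sets. -/
def testLevel (e : ℕ) (A : ℕ → Bool) (n : ℕ) : Set (ℕ → Bool) :=
  openOf {σ | ∃ m, OracleComputes e A (Nat.pair n (Encodable.encode σ)) m}

/-- A Martin-Löf test relative to `A`: a uniformly `A`-c.e. sequence of open sets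
`G n` with `μ(G n) ≤ 2^{-n}`. -/
def MLTestIn (A : ℕ → Bool) (G : ℕ → Set (ℕ → Bool)) : Prop :=
  (∃ e, ∀ n, G n = testLevel e A n) ∧ ∀ n, μCantor (G n) ≤ 2⁻¹ ^ n

/-- `X` is Martin-Löf random relative to `A`: it passes every `A`-Martin-Löf test. -/
def MLRandomIn (A X : ℕ → Bool) : Prop :=
  ∀ G : ℕ → Set (ℕ → Bool), MLTestIn A G → ∃ n, X ∉ G n

/-- `X` is Martin-Löf random. -/
def MLRandom (X : ℕ → Bool) : Prop := MLRandomIn emptyOracle X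

/-- The domain of the `e`-th machine, viewed as a set of binary strings. -/
def machineDom (e : ℕ) : Set (List Bool) :=
  {σ | ((Denumerable.ofNat Nat.Partrec.Code e).eval (Encodable.encode σ)).Dom}

/-- The `e`-th machine is prefix-free. -/
def PrefixFreeMachine (e : ℕ) : Prop := PrefixFreeSet (machineDom e)

/-- Prefix-free Kolmogorov complexity (defined, up to an additive constant, as the
least `|σ| + 2e + 2` over prefix-free machines `e` and programs `σ` producing `x`). -/
noncomputable def Kcpx (x : ℕ) : ℕ :=
  sInf {k | ∃ e, ∃ σ : List Bool, PrefixFreeMachine e ∧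
    x ∈ (Denumerable.ofNat Nat.Partrec.Code e).eval (Encodable.encode σ) ∧
    k = σ.length + 2 * e + 2}

/-- `K(n)` means `K(1^n)`. -/
noncomputable def KofNat (n : ℕ) : ℕ := Kcpx (Encodable.encode (List.replicate n true))

/-- `A` is K-trivial: `K(A↾n) ≤ K(n) + c` for some constant `c`. -/
def KTrivial (A : ℕ → Bool) : Prop :=
  ∃ c, ∀ n, Kcpx (Encodable.encode (strPrefix A n)) ≤ KofNat n + c


/-! ### Auxiliary lemmas -/

section Aux

open Set

lemma strPrefix_length (X : ℕ → Bool) (n : ℕ) : (strPrefix X n).length = n := by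
  simp [strPrefix]

lemma isPrefixOf_iff (σ : List Bool) (X : ℕ → Bool) :
    IsPrefixOf σ X ↔ ∀ i, (h : i < σ.length) → X i = σ[i] := by
  constructor
  · intro h i hi; exact h ⟨i, hi⟩
  · intro h i; exact h i i.2

lemma isPrefixOf_strPrefix (X : ℕ → Bool) (n : ℕ) : IsPrefixOf (strPrefix X n) X := by
  rw [isPrefixOf_iff]
  intro i hi
  simp [strPrefix]

lemma eq_strPrefix_of_isPrefixOf {σ : List Bool} {X : ℕ → Bool} (h : IsPrefixOf σ X) :
    σ = strPrefix X σ.length := by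
  rw [isPrefixOf_iff] at h
  apply List.ext_getElem (by simp [strPrefix])
  intro i hi hi'
  have := h i hi
  simp [strPrefix, ← this]

lemma strPrefix_prefix (X : ℕ → Bool) {m n : ℕ} (h : m ≤ n) :
    strPrefix X m <+: strPrefix X n := by
  have : strPrefix X m = (strPrefix X n).take m := by
    simp [strPrefix, ← List.map_take, List.take_range, Nat.min_eq_left h]
  rw [this]
  exact List.take_prefix _ _

lemma isPrefixOf_of_prefix {σ ρ : List Bool} {X : ℕ → Bool} (h : σ <+: ρ)
    (hρ : IsPrefixOf ρ X) : IsPrefixOf σ X := by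
  rw [isPrefixOf_iff] at hρ ⊢
  intro i hi
  have hlen := h.length_le
  rw [hρ i (lt_of_lt_of_le hi hlen)]
  exact (h.getElem hi).symm

lemma prefix_of_both {σ ρ : List Bool} {X : ℕ → Bool} (h1 : IsPrefixOf σ X)
    (h2 : IsPrefixOf ρ X) (h : σ.length ≤ ρ.length) : σ <+: ρ := by
  rw [eq_strPrefix_of_isPrefixOf h1, eq_strPrefix_of_isPrefixOf h2]
  exact strPrefix_prefix X h

lemma cylinder_mono {σ ρ : List Bool} (h : σ <+: ρ) : cylinder ρ ⊆ cylinder σ :=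
  fun _ hX => isPrefixOf_of_prefix h hX

lemma cylinder_disjoint {σ ρ : List Bool} (h1 : ¬ σ <+: ρ) (h2 : ¬ ρ <+: σ) :
    Disjoint (cylinder σ) (cylinder ρ) := by
  rw [Set.disjoint_left]
  intro X hσ hρ
  rcases le_total σ.length ρ.length with h | h
  · exact h1 (prefix_of_both hσ hρ h)
  · exact h2 (prefix_of_both hρ hσ h)

lemma measurableSet_cylinder (σ : List Bool) : MeasurableSet (cylinder σ) := by
  have : cylinder σ = ⋂ i : Fin σ.length, (fun X : ℕ → Bool => X i) ⁻¹' {σ.get i} := by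
    ext X; simp [_root_.cylinder, IsPrefixOf]
  rw [this]
  exact MeasurableSet.iInter fun i =>
    (measurable_pi_apply (i : ℕ)) (measurableSet_singleton _)

lemma measurable_binaryDigits : Measurable binaryDigits := by
  rw [measurable_pi_iff]
  intro n
  exact (measurable_of_countable (fun k : ℤ => decide (k % 2 = 1))).comp
    (Int.measurable_floor.comp (measurable_id.mul_const ((2:ℝ) ^ (n + 1))))

/-- The value of a binary string as an integer. -/
def valB (σ : List Bool) : ℤ := σ.foldl (fun a b => 2 * a + cond b 1 0) 0

lemma valB_append (σ : List Bool) (b : Bool) :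
    valB (σ ++ [b]) = 2 * valB σ + cond b 1 0 := by
  simp [valB, List.foldl_append]

lemma valB_nonneg (σ : List Bool) : 0 ≤ valB σ := by
  induction σ using List.reverseRecOn with
  | nil => simp [valB]
  | append_singleton l b ih => rw [valB_append]; cases b <;> simp <;> omega

lemma valB_lt (σ : List Bool) : valB σ < 2 ^ σ.length := by
  induction σ using List.reverseRecOn with
  | nil => simp [valB]
  | append_singleton l b ih =>
      rw [valB_append]
      simp only [List.length_append, List.length_singleton, pow_succ]
      cases b <;> simp <;> omega

lemma floor_two_mul_ediv (y : ℝ) : ⌊2 * y⌋ / 2 = ⌊y⌋ := by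
  set k := ⌊2 * y⌋ with hk
  symm
  rw [Int.floor_eq_iff]
  have h1 : (k : ℝ) ≤ 2 * y := Int.floor_le _
  have h2 : 2 * y < k + 1 := Int.lt_floor_add_one _
  have e1 : 2 * (k / 2) ≤ k := by omega
  have e2 : k + 1 ≤ 2 * (k / 2) + 2 := by omega
  constructor
  · have : ((2 * (k / 2) : ℤ) : ℝ) ≤ (k : ℝ) := by exact_mod_cast e1
    push_cast at this ⊢
    linarith
  · have : ((k : ℤ) : ℝ) + 1 ≤ ((2 * (k / 2) + 2 : ℤ) : ℝ) := by exact_mod_cast e2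
    push_cast at this ⊢
    linarith

lemma isPrefixOf_append_singleton {l : List Bool} {b : Bool} {X : ℕ → Bool} :
    IsPrefixOf (l ++ [b]) X ↔ IsPrefixOf l X ∧ X l.length = b := by
  simp only [isPrefixOf_iff, List.length_append, List.length_singleton]
  constructor
  · intro h
    refine ⟨fun i hi => ?_, ?_⟩
    · rw [h i (by omega), List.getElem_append_left hi]
    · have := h l.length (by omega)
      simpa using this
  · rintro ⟨h1, h2⟩ i hi
    rcases lt_or_eq_of_le (Nat.lt_succ_iff.mp hi) with hi' | hi'
    · rw [List.getElem_append_left hi']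
      exact h1 i hi'
    · subst hi'
      simpa using h2

lemma prefix_iff_floor (σ : List Bool) (x : ℝ) (hx : x ∈ Set.Ico (0:ℝ) 1) :
    IsPrefixOf σ (binaryDigits x) ↔ ⌊x * 2 ^ σ.length⌋ = valB σ := by
  induction σ using List.reverseRecOn with
  | nil =>
      simp only [List.length_nil, pow_zero, mul_one, valB]
      constructor
      · intro _
        exact Int.floor_eq_zero_iff.mpr (by simpa using hx)
      · intro _ i
        exact absurd i.2 (by simp)
  | append_singleton l b ih =>
      rw [isPrefixOf_append_singleton, ih, valB_append]
      set n := l.length with hn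
      have hlen : (l ++ [b]).length = n + 1 := by simp [hn]
      rw [hlen]
      have key : ⌊x * 2 ^ (n + 1)⌋ / 2 = ⌊x * 2 ^ n⌋ := by
        have : x * 2 ^ (n + 1) = 2 * (x * 2 ^ n) := by ring
        rw [this, floor_two_mul_ediv]
      have hdig : binaryDigits x n = b ↔ ⌊x * 2 ^ (n + 1)⌋ % 2 = cond b 1 0 := by
        have hmod : ⌊x * 2 ^ (n + 1)⌋ % 2 = 0 ∨ ⌊x * 2 ^ (n + 1)⌋ % 2 = 1 := by omega
        cases b <;> simp [binaryDigits] <;> omega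
      rw [hdig]
      set k := ⌊x * 2 ^ (n + 1)⌋ with hk
      have hc : cond b 1 0 = (0 : ℤ) ∨ cond b 1 0 = (1 : ℤ) := by cases b <;> simp
      constructor
      · rintro ⟨h1, h2⟩
        omega
      · intro h
        exact ⟨by omega, by omega⟩

lemma μCantor_cylinder (σ : List Bool) : μCantor (cylinder σ) = 2⁻¹ ^ σ.length := by
  set n := σ.length with hn
  have hv0 := valB_nonneg σ
  have hv1 := valB_lt σ
  rw [μCantor, Measure.map_apply measurable_binaryDigits (measurableSet_cylinder σ),
    Measure.restrict_apply' (by measurability)]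
  have hset : binaryDigits ⁻¹' cylinder σ ∩ Set.Ico (0:ℝ) 1
      = Set.Ico ((valB σ : ℝ) / 2 ^ n) (((valB σ : ℝ) + 1) / 2 ^ n) := by
    ext x
    simp only [Set.mem_inter_iff, Set.mem_preimage, Set.mem_Ico]
    constructor
    · rintro ⟨hpre, hx⟩
      have hfl := (prefix_iff_floor σ x hx).mp hpre
      rw [← hn] at hfl
      have h1 : (valB σ : ℝ) ≤ x * 2 ^ n := by rw [← hfl]; exact Int.floor_le _
      have h2 : x * 2 ^ n < (valB σ : ℝ) + 1 := by
        rw [← hfl]; exact Int.lt_floor_add_one _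
      have hp : (0:ℝ) < 2 ^ n := by positivity
      constructor
      · rw [div_le_iff₀ hp]; linarith
      · rw [lt_div_iff₀ hp]; linarith
    · rintro ⟨h1, h2⟩
      have hp : (0:ℝ) < 2 ^ n := by positivity
      rw [div_le_iff₀ hp] at h1
      rw [lt_div_iff₀ hp] at h2
      have hx : x ∈ Set.Ico (0:ℝ) 1 := by
        constructor
        · nlinarith [hv0, (by exact_mod_cast hv0 : (0:ℝ) ≤ (valB σ : ℝ))]
        · have hvr : (valB σ : ℝ) + 1 ≤ 2 ^ n := by
            have : (valB σ : ℝ) + 1 ≤ ((2:ℝ) ^ n : ℝ) := by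
              have : valB σ + 1 ≤ 2 ^ n := hv1
              calc (valB σ : ℝ) + 1 = ((valB σ + 1 : ℤ) : ℝ) := by push_cast; ring
                _ ≤ ((2 ^ n : ℤ) : ℝ) := by exact_mod_cast this
                _ = 2 ^ n := by push_cast; ring
            exact this
          nlinarith
      refine ⟨?_, hx⟩
      show IsPrefixOf σ (binaryDigits x)
      rw [prefix_iff_floor σ x hx, ← hn]
      rw [Int.floor_eq_iff]
      constructor
      · exact h1
      · exact_mod_cast h2
  rw [hset, Real.volume_Ico]
  have : ((valB σ : ℝ) + 1) / 2 ^ n - (valB σ : ℝ) / 2 ^ n = (2⁻¹ : ℝ) ^ n := by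
    field_simp
    rw [← mul_pow]; norm_num
  rw [this]
  rw [ENNReal.ofReal_pow (by norm_num)]
  congr 1
  rw [ENNReal.ofReal_inv_of_pos (by norm_num)]
  norm_num

lemma measurableSet_openOf (S : Set (List Bool)) : MeasurableSet (openOf S) :=
  MeasurableSet.biUnion (Set.to_countable S) fun σ _ => measurableSet_cylinder σ

lemma measure_biUnion_prefixFree {S : Set (List Bool)} (hpf : PrefixFreeSet S)
    (f : List Bool → Set (ℕ → Bool)) (hm : ∀ σ, MeasurableSet (f σ))
    (hsub : ∀ σ, f σ ⊆ cylinder σ) :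
    μCantor (⋃ σ ∈ S, f σ) = ∑' σ : S, μCantor (f σ) := by
  apply measure_biUnion (Set.to_countable S)
  · intro σ hσ ρ hρ hne
    have : Disjoint (cylinder σ) (cylinder ρ) := by
      apply cylinder_disjoint
      · intro h; exact hne (hpf σ hσ ρ hρ h)
      · intro h; exact hne ((hpf ρ hρ σ hσ h).symm)
    exact this.mono (hsub σ) (hsub ρ)
  · exact fun σ _ => hm σ

end Aux

/-- counting argument showing that `P̂` has positive measure. -/
theorem stmt0 (P : Set (ℕ → Bool)) (hP : MeasurableSet P) (τ : List Bool)
    (δ : ℝ≥0∞) (hδ : 0 < δ) (hd : δ ≤ dens τ P)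
    (Phat : Set (ℕ → Bool))
    (hPhat : Phat = {X | IsPrefixOf τ X ∧
      ∀ σ : List Bool, τ <+: σ → IsPrefixOf σ X → δ / 2 ≤ dens σ P})
    (S : Set (List Bool)) (hpf : PrefixFreeSet S) (hext : ∀ σ ∈ S, τ <+: σ)
    (hcover : cylinder τ \ Phat = openOf S) :
    μCantor (openOf S) * (1 - δ / 2) ≤ μCantor (cylinder τ \ P) ∧
      0 < μCantor Phat := by
  classical
  have htwo0 : (2:ℝ≥0∞) ≠ 0 := two_ne_zero
  have htop : (2:ℝ≥0∞) ≠ ⊤ := ENNReal.ofNat_ne_top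
  have hpowinv : ∀ n : ℕ, ((2:ℝ≥0∞) ^ n) * (2⁻¹ ^ n) = 1 := by
    intro n; rw [← mul_pow, ENNReal.mul_inv_cancel htwo0 htop, one_pow]
  have hfinpow : ∀ n : ℕ, ((2:ℝ≥0∞)⁻¹ ^ n) ≠ ⊤ :=
    fun n => ENNReal.pow_ne_top (by simp)
  have hpow0 : ∀ n : ℕ, ((2:ℝ≥0∞)⁻¹ ^ n) ≠ 0 :=
    fun n => pow_ne_zero n (ENNReal.inv_ne_zero.mpr htop)
  have hcylfin : ∀ σ : List Bool, μCantor (cylinder σ) ≠ ⊤ := by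
    intro σ; rw [μCantor_cylinder]; exact hfinpow _
  have hμinter_le : ∀ (σ : List Bool) (c : ℝ≥0∞), dens σ P ≤ c →
      μCantor (cylinder σ ∩ P) ≤ c * 2⁻¹ ^ σ.length := by
    intro σ c h
    have h2 := mul_le_mul_left h (2⁻¹ ^ σ.length)
    rw [dens] at h2
    calc μCantor (cylinder σ ∩ P)
        = μCantor (cylinder σ ∩ P) * 2 ^ σ.length * 2⁻¹ ^ σ.length := by
          rw [mul_assoc, hpowinv, mul_one]
      _ ≤ c * 2⁻¹ ^ σ.length := h2
  have hμinter_ge : ∀ (σ : List Bool) (c : ℝ≥0∞), c ≤ dens σ P →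
      c * 2⁻¹ ^ σ.length ≤ μCantor (cylinder σ ∩ P) := by
    intro σ c h
    have h2 := mul_le_mul_left h (2⁻¹ ^ σ.length)
    rw [dens, mul_assoc, hpowinv, mul_one] at h2
    exact h2
  have hdiff : ∀ σ : List Bool, μCantor (cylinder σ \ P)
      = μCantor (cylinder σ) - μCantor (cylinder σ ∩ P) := by
    intro σ
    have h : cylinder σ \ P = cylinder σ \ (cylinder σ ∩ P) := by
      rw [Set.diff_self_inter]
    rw [h]
    exact measure_diff Set.inter_subset_left
      ((measurableSet_cylinder σ).inter hP).nullMeasurableSet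
      ((lt_of_le_of_lt (measure_mono Set.inter_subset_left)
        (lt_top_iff_ne_top.mpr (hcylfin σ))).ne)
  have hδ1 : δ ≤ 1 := by
    refine hd.trans ?_
    rw [dens]
    calc μCantor (cylinder τ ∩ P) * 2 ^ τ.length
        ≤ μCantor (cylinder τ) * 2 ^ τ.length :=
          mul_le_mul_left (measure_mono Set.inter_subset_left) _
      _ = 1 := by rw [μCantor_cylinder, mul_comm]; exact hpowinv _
  have hhalf_le : δ / 2 ≤ 1 := le_trans (ENNReal.half_le_self) hδ1
  -- the set of minimal strings above τ of low density
  set M : Set (List Bool) := {ρ | τ <+: ρ ∧ dens ρ P < δ / 2 ∧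
    ∀ ρ' : List Bool, τ <+: ρ' → ρ' <+: ρ → ρ'.length < ρ.length →
      ¬ dens ρ' P < δ / 2} with hM
  have hMpf : PrefixFreeSet M := by
    intro ρ hρ ρ' hρ' hpre
    by_contra hne
    have hlt : ρ.length < ρ'.length := by
      rcases lt_or_eq_of_le hpre.length_le with h | h
      · exact h
      · exact absurd (hpre.eq_of_length h) hne
    exact hρ'.2.2 ρ hρ.1 hpre hlt hρ.2.1
  have hMeq : cylinder τ \ Phat = openOf M := by
    ext X
    simp only [Set.mem_diff, openOf, Set.mem_iUnion, exists_prop]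
    constructor
    · rintro ⟨hXτ, hXP⟩
      rw [hPhat] at hXP
      simp only [Set.mem_setOf_eq, not_and, not_forall] at hXP
      obtain ⟨σ, hστ, hσX, hσd⟩ := hXP hXτ
      have hσd' : dens σ P < δ / 2 := lt_of_not_ge hσd
      have hex : ∃ n, τ <+: strPrefix X n ∧ dens (strPrefix X n) P < δ / 2 := by
        refine ⟨σ.length, ?_, ?_⟩
        · rw [← eq_strPrefix_of_isPrefixOf hσX]; exact hστ
        · rw [← eq_strPrefix_of_isPrefixOf hσX]; exact hσd'
      have hn₀ := Nat.find_spec hex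
      refine ⟨strPrefix X (Nat.find hex), ⟨hn₀.1, hn₀.2, ?_⟩, isPrefixOf_strPrefix X _⟩
      intro ρ' hτρ' hρ'pre hlen hd'
      have hρ'X : IsPrefixOf ρ' X :=
        isPrefixOf_of_prefix hρ'pre (isPrefixOf_strPrefix X _)
      have heq' : ρ' = strPrefix X ρ'.length := eq_strPrefix_of_isPrefixOf hρ'X
      have hlen' : ρ'.length < Nat.find hex := by
        rwa [strPrefix_length] at hlen
      refine Nat.find_min hex hlen' ⟨?_, ?_⟩
      · rw [← heq']; exact hτρ'
      · rw [← heq']; exact hd'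
    · rintro ⟨ρ, hρM, hρX⟩
      obtain ⟨hτρ, hρd, -⟩ := hρM
      refine ⟨isPrefixOf_of_prefix hτρ hρX, ?_⟩
      rw [hPhat]
      rintro ⟨-, h⟩
      exact absurd (h ρ hτρ hρX) (not_le.mpr hρd)
  have hOS : openOf S = openOf M := by rw [← hcover, hMeq]
  have part1 : μCantor (openOf S) * (1 - δ / 2) ≤ μCantor (cylinder τ \ P) := by
    rw [hOS]
    have e1 : μCantor (openOf M) = ∑' ρ : M, μCantor (cylinder (ρ : List Bool)) :=
      measure_biUnion_prefixFree hMpf _ (fun σ => measurableSet_cylinder σ)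
        (fun σ => subset_rfl)
    have e2 : μCantor (⋃ ρ ∈ M, cylinder ρ \ P)
        = ∑' ρ : M, μCantor (cylinder (ρ : List Bool) \ P) :=
      measure_biUnion_prefixFree hMpf _ (fun σ => (measurableSet_cylinder σ).diff hP)
        (fun σ => Set.diff_subset)
    calc μCantor (openOf M) * (1 - δ / 2)
        = ∑' ρ : M, μCantor (cylinder (ρ : List Bool)) * (1 - δ / 2) := by
          rw [e1, ENNReal.tsum_mul_right]
      _ ≤ ∑' ρ : M, μCantor (cylinder (ρ : List Bool) \ P) := by
          apply ENNReal.tsum_le_tsum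
          intro ρ
          obtain ⟨hρτ, hρd, -⟩ := ρ.2
          rw [hdiff, μCantor_cylinder]
          have h1 : μCantor (cylinder (ρ : List Bool) ∩ P)
              ≤ δ / 2 * 2⁻¹ ^ (ρ : List Bool).length := hμinter_le _ _ hρd.le
          calc 2⁻¹ ^ (ρ : List Bool).length * (1 - δ / 2)
              = (1 - δ / 2) * 2⁻¹ ^ (ρ : List Bool).length := mul_comm _ _
            _ = 1 * 2⁻¹ ^ (ρ : List Bool).length
                - δ / 2 * 2⁻¹ ^ (ρ : List Bool).length :=
                ENNReal.sub_mul (fun _ _ => hfinpow _)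
            _ = 2⁻¹ ^ (ρ : List Bool).length
                - δ / 2 * 2⁻¹ ^ (ρ : List Bool).length := by rw [one_mul]
            _ ≤ 2⁻¹ ^ (ρ : List Bool).length
                - μCantor (cylinder (ρ : List Bool) ∩ P) := tsub_le_tsub_left h1 _
      _ = μCantor (⋃ ρ ∈ M, cylinder ρ \ P) := e2.symm
      _ ≤ μCantor (cylinder τ \ P) := measure_mono
          (Set.iUnion₂_subset fun ρ hρ =>
            Set.diff_subset_diff_left (cylinder_mono hρ.1))
  refine ⟨part1, ?_⟩
  have hPsub : Phat ⊆ cylinder τ := by rw [hPhat]; intro X hX; exact hX.1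
  by_contra h0
  push_neg at h0
  have hz : μCantor Phat = 0 := le_antisymm h0 zero_le
  have hcup : cylinder τ ⊆ Phat ∪ openOf S := by
    intro X hX
    by_cases hXP : X ∈ Phat
    · exact Or.inl hXP
    · exact Or.inr (hcover ▸ ⟨hX, hXP⟩)
  have hle : μCantor (cylinder τ) ≤ μCantor (openOf S) := by
    calc μCantor (cylinder τ) ≤ μCantor (Phat ∪ openOf S) := measure_mono hcup
      _ ≤ μCantor Phat + μCantor (openOf S) := measure_union_le _ _
      _ = μCantor (openOf S) := by rw [hz, zero_add]
  have hge : μCantor (openOf S) ≤ μCantor (cylinder τ) :=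
    measure_mono (by rw [← hcover]; exact Set.diff_subset)
  have heq : μCantor (openOf S) = 2⁻¹ ^ τ.length := by
    rw [le_antisymm hge hle, μCantor_cylinder]
  have hbound : μCantor (cylinder τ \ P) ≤ (1 - δ) * 2⁻¹ ^ τ.length := by
    rw [hdiff τ, μCantor_cylinder]
    have h1 : δ * 2⁻¹ ^ τ.length ≤ μCantor (cylinder τ ∩ P) := hμinter_ge _ _ hd
    calc 2⁻¹ ^ τ.length - μCantor (cylinder τ ∩ P)
        ≤ 2⁻¹ ^ τ.length - δ * 2⁻¹ ^ τ.length := tsub_le_tsub_left h1 _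
      _ = (1 - δ) * 2⁻¹ ^ τ.length := by
          rw [ENNReal.sub_mul (fun _ _ => hfinpow _), one_mul]
  have hmain : (1 - δ / 2) * 2⁻¹ ^ τ.length ≤ (1 - δ) * 2⁻¹ ^ τ.length := by
    calc (1 - δ / 2) * 2⁻¹ ^ τ.length = μCantor (openOf S) * (1 - δ / 2) := by
          rw [heq, mul_comm]
      _ ≤ μCantor (cylinder τ \ P) := part1
      _ ≤ (1 - δ) * 2⁻¹ ^ τ.length := hbound
  have hcancel : 1 - δ / 2 ≤ 1 - δ :=
    (ENNReal.mul_le_mul_iff_left (hpow0 _) (hfinpow _)).mp hmain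
  have hadd : (1:ℝ≥0∞) + δ / 2 ≤ 1 := by
    calc (1:ℝ≥0∞) + δ / 2 = ((1 - δ / 2) + δ / 2) + δ / 2 := by
          rw [tsub_add_cancel_of_le hhalf_le]
      _ = (1 - δ / 2) + δ := by rw [add_assoc, ENNReal.add_halves]
      _ ≤ (1 - δ) + δ := add_le_add_left hcancel _
      _ = 1 := tsub_add_cancel_of_le hδ1
  have hhalf0 : δ / 2 ≤ 0 := by
    have hadd' : (1:ℝ≥0∞) + δ / 2 ≤ 1 + 0 := by simpa using hadd
    exact (ENNReal.add_le_add_iff_left (a := 1) ENNReal.one_ne_top).mp hadd'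
  have : δ = 0 := by
    have h2 : δ / 2 = 0 := le_antisymm hhalf0 zero_le
    rcases ENNReal.div_eq_zero_iff.mp h2 with h | h
    · exact h
    · exact absurd h htop
  exact hδ.ne' this
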